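/- arXiv:math/0608440 — 4 statements merged into one kernel-verified Lean document; each statement's English description precedes it below -/
import Mathlib

section
/- Let 0 < β ≤ α < π and let θ ∈ ℝ satisfy α − β < θ < α + β and θ < 2π − α − β. Then the series ∑_{m=1}^{∞} sin(mα) sin(mβ) sin(mθ)/m converges and its sum equals π/4. -/
open scoped Real
open Filter Finset

private lemma sum_Icc_one_eq (h : ℕ → ℝ) (n : ℕ) :
    ∑ m ∈ Finset.Icc 1 n, h m = ∑ i ∈ Finset.range n, h (i + 1) := by
  rw [← Finset.Ico_add_one_right_eq_Icc, Finset.sum_Ico_eq_sum_range]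
  simp [Nat.add_comm]

private lemma sin_partial_bound {x : ℝ} (hs : 0 < Real.sin (x / 2)) (n : ℕ) :
    ‖∑ i ∈ Finset.range n, Real.sin ((i + 1) * x)‖ ≤ 1 / Real.sin (x / 2) := by
  have key : Real.sin (x / 2) * ∑ i ∈ Finset.range n, Real.sin ((i + 1) * x)
      = (Real.cos (x / 2) - Real.cos ((n + 1 / 2) * x)) / 2 := by
    induction n with
    | zero =>
      simp only [Finset.sum_range_zero, mul_zero, Nat.cast_zero]
      rw [show (0 + 1 / 2 : ℝ) * x = x / 2 by ring]
      ring
    | succ n ih =>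
      rw [Finset.sum_range_succ, mul_add, ih]
      have h1 : ((n : ℝ) + 1 / 2) * x = ((n : ℝ) + 1) * x - x / 2 := by ring
      have h2 : (((n : ℕ) + 1 : ℕ) + 1 / 2 : ℝ) * x = ((n : ℝ) + 1) * x + x / 2 := by
        push_cast; ring
      push_cast
      rw [show ((n : ℝ) + 1 + 1 / 2) * x = ((n : ℝ) + 1) * x + x / 2 by ring,
        show ((n : ℝ) + 1 / 2) * x = ((n : ℝ) + 1) * x - x / 2 by ring,
        Real.cos_sub, Real.cos_add]
      ring
  have hsum : ∑ i ∈ Finset.range n, Real.sin ((i + 1) * x)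
      = (Real.cos (x / 2) - Real.cos ((n + 1 / 2) * x)) / (2 * Real.sin (x / 2)) := by
    rw [eq_div_iff (by positivity)]
    linear_combination 2 * key
  rw [Real.norm_eq_abs, hsum, abs_div, abs_of_pos (by positivity : (0:ℝ) < 2 * Real.sin (x / 2))]
  have h1 : |Real.cos (x / 2) - Real.cos ((n + 1 / 2) * x)| ≤ 2 := by
    have := Real.abs_cos_le_one (x / 2)
    have := Real.abs_cos_le_one ((n + 1 / 2) * x)
    calc |Real.cos (x / 2) - Real.cos ((n + 1 / 2) * x)|
        ≤ |Real.cos (x / 2)| + |Real.cos ((n + 1 / 2) * x)| := abs_sub _ _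
      _ ≤ 2 := by linarith
  rw [show (1 : ℝ) / Real.sin (x / 2) = 2 / (2 * Real.sin (x / 2)) by
    field_simp]
  gcongr

/-- Sawtooth Fourier series: `∑_{m=1}^∞ sin (m x) / m = (π - x) / 2` for `0 < x < 2π`. -/
private lemma sawtooth {x : ℝ} (hx0 : 0 < x) (hx2 : x < 2 * π) :
    Tendsto (fun N : ℕ => ∑ m ∈ Finset.Icc 1 N, Real.sin (m * x) / m)
      atTop (nhds ((π - x) / 2)) := by
  have hs : 0 < Real.sin (x / 2) :=
    Real.sin_pos_of_pos_of_lt_pi (by linarith) (by linarith)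
  -- Dirichlet test: partial sums converge to some l
  have hc : CauchySeq (fun n => ∑ i ∈ Finset.range n,
      (1 / ((i : ℝ) + 1)) • Real.sin ((i + 1) * x)) := by
    apply Antitone.cauchySeq_series_mul_of_tendsto_zero_of_bounded
      (b := 1 / Real.sin (x / 2))
    · intro a b hab
      apply one_div_le_one_div_of_le (by positivity)
      exact_mod_cast by exact_mod_cast Nat.add_le_add_right hab 1
    · exact tendsto_one_div_add_atTop_nhds_zero_nat
    · exact sin_partial_bound hs
  obtain ⟨l, hl⟩ := cauchySeq_tendsto_of_complete hc
  set g : ℕ → ℝ := fun m => Real.sin (m * x) / m with hg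
  have hconv : ∀ n : ℕ, ∑ i ∈ Finset.range n,
      (1 / ((i : ℝ) + 1)) • Real.sin ((i + 1) * x) = ∑ m ∈ Finset.Icc 1 n, g m := by
    intro n
    rw [sum_Icc_one_eq]
    refine Finset.sum_congr rfl fun i _ => ?_
    simp only [hg, smul_eq_mul]
    push_cast
    ring
  have hl2 : Tendsto (fun n => ∑ m ∈ Finset.Icc 1 n, g m) atTop (nhds l) := by
    simpa only [hconv] using hl
  -- Identify l via Abel's limit theorem
  have hab : Tendsto (fun n => ∑ i ∈ Finset.range n, g i) atTop (nhds l) := by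
    apply (tendsto_add_atTop_iff_nat 1).mp
    have : ∀ n : ℕ, ∑ i ∈ Finset.range (n + 1), g i = ∑ m ∈ Finset.Icc 1 n, g m := by
      intro n
      rw [Finset.sum_range_succ' g n, sum_Icc_one_eq]
      simp [hg]
    simpa only [this] using hl2
  have habel := Real.tendsto_tsum_powerSeries_nhdsWithin_lt hab
  set F : ℝ → ℝ := fun r => (-(Complex.log (1 - r * Complex.exp (x * Complex.I)))).im with hF
  have heq : ∀ r ∈ Set.Ioo (0:ℝ) 1, ∑' n, g n * r ^ n = F r := by
    intro r hr
    have hz : ‖(r : ℂ) * Complex.exp (x * Complex.I)‖ < 1 := by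
      rw [norm_mul, Complex.norm_exp_ofReal_mul_I,
        Complex.norm_real, Real.norm_eq_abs, abs_of_pos hr.1]
      simpa using hr.2
    have hsum := Complex.hasSum_taylorSeries_neg_log hz
    have him := hsum.mapL Complex.imCLM
    have hterm : ∀ n : ℕ, Complex.imCLM (((r : ℂ) * Complex.exp (x * Complex.I)) ^ n / n)
        = g n * r ^ n := by
      intro n
      have e1 : ((r : ℂ) * Complex.exp (x * Complex.I)) ^ n
          = (r : ℂ) ^ n * Complex.exp ((n * x : ℝ) * Complex.I) := by
        rw [mul_pow, ← Complex.exp_nat_mul]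
        congr 2
        push_cast
        ring
      have e2 : ((r : ℂ) * Complex.exp (x * Complex.I)) ^ n / n
          = ((r ^ n / n : ℝ) : ℂ) * Complex.exp ((n * x : ℝ) * Complex.I) := by
        rw [e1]; push_cast; ring
      rw [e2]
      simp only [Complex.imCLM_apply, Complex.mul_im, Complex.ofReal_re, Complex.ofReal_im,
        Complex.exp_ofReal_mul_I_im, Complex.exp_ofReal_mul_I_re, hg]
      ring
    have him2 : HasSum (fun n => g n * r ^ n)
        ((-(Complex.log (1 - r * Complex.exp (x * Complex.I)))).im) := by
      simpa only [hterm, Complex.imCLM_apply, Complex.ofReal_mul] using him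
    exact him2.tsum_eq
  have hev : (fun r : ℝ => ∑' n, g n * r ^ n) =ᶠ[nhdsWithin 1 (Set.Iio 1)] F := by
    filter_upwards [Ioo_mem_nhdsLT_of_mem (show (1:ℝ) ∈ Set.Ioc 0 1 by norm_num)] with r hr
    exact heq r hr
  have hFlim : Tendsto F (nhdsWithin 1 (Set.Iio 1)) (nhds ((π - x) / 2)) := by
    have hcos : Real.cos x < 1 := by
      have hc2 := Real.cos_two_mul (x / 2)
      rw [show 2 * (x / 2) = x by ring] at hc2
      nlinarith [Real.sin_sq_add_cos_sq (x / 2)]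
    have hre : (0 : ℝ) < ((1 : ℂ) - (1 : ℝ) * Complex.exp (x * Complex.I)).re := by
      simp only [Complex.ofReal_one, one_mul, Complex.sub_re, Complex.one_re,
        Complex.exp_ofReal_mul_I_re]
      linarith
    have hmem : ((1 : ℂ) - (1 : ℝ) * Complex.exp (x * Complex.I)) ∈ Complex.slitPlane :=
      Complex.mem_slitPlane_iff.mpr (Or.inl hre)
    have hcontinner : ContinuousAt (fun r : ℝ => (1 : ℂ) - r * Complex.exp (x * Complex.I)) 1 := by
      fun_prop
    have hcont : ContinuousAt F 1 := by
      have t2 : Tendsto (fun w : ℂ => -Complex.log w)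
          (nhds ((1 : ℂ) - (1 : ℝ) * Complex.exp (x * Complex.I)))
          (nhds (-Complex.log ((1 : ℂ) - (1 : ℝ) * Complex.exp (x * Complex.I)))) :=
        (continuousAt_clog hmem).neg
      have t3 := Complex.continuous_im.tendsto
        (-Complex.log ((1 : ℂ) - (1 : ℝ) * Complex.exp (x * Complex.I)))
      exact (t3.comp t2).comp hcontinner
    have hval : F 1 = (π - x) / 2 := by
      have hw : (1 : ℂ) - (1 : ℝ) * Complex.exp (x * Complex.I)
          = (2 * Real.sin (x / 2) : ℝ) *
            ((Real.cos ((x - π) / 2) : ℂ) + (Real.sin ((x - π) / 2) : ℂ) * Complex.I) := by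
        have c1 : Real.cos ((x - π) / 2) = Real.sin (x / 2) := by
          rw [show (x - π) / 2 = x / 2 - π / 2 by ring, Real.cos_sub]
          simp
        have c2 : Real.sin ((x - π) / 2) = -Real.cos (x / 2) := by
          rw [show (x - π) / 2 = x / 2 - π / 2 by ring, Real.sin_sub]
          simp
        have c3 : Real.cos x = 2 * Real.cos (x / 2) ^ 2 - 1 := by
          have := Real.cos_two_mul (x / 2)
          rwa [show 2 * (x / 2) = x by ring] at this
        have c4 : Real.sin x = 2 * Real.sin (x / 2) * Real.cos (x / 2) := by
          have := Real.sin_two_mul (x / 2)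
          rwa [show 2 * (x / 2) = x by ring] at this
        apply Complex.ext
        · simp only [Complex.sub_re, Complex.one_re, Complex.ofReal_one, one_mul,
            Complex.mul_re, Complex.add_re, Complex.add_im, Complex.ofReal_re, Complex.ofReal_im,
            Complex.mul_im, Complex.I_re, Complex.I_im, Complex.exp_ofReal_mul_I_re,
            Complex.exp_ofReal_mul_I_im, mul_zero, mul_one, zero_mul, sub_zero, add_zero, zero_add,
            zero_sub]
          rw [c1, c3]
          nlinarith [Real.sin_sq_add_cos_sq (x / 2)]
        · simp only [Complex.sub_im, Complex.one_im, Complex.ofReal_one, one_mul,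
            Complex.mul_re, Complex.add_re, Complex.add_im, Complex.ofReal_re, Complex.ofReal_im,
            Complex.mul_im, Complex.I_re, Complex.I_im, Complex.exp_ofReal_mul_I_re,
            Complex.exp_ofReal_mul_I_im, mul_zero, mul_one, zero_mul, sub_zero, add_zero, zero_add,
            zero_sub]
          rw [c2, c4]
          ring
      have harg : ((1 : ℂ) - (1 : ℝ) * Complex.exp (x * Complex.I)).arg = (x - π) / 2 := by
        rw [hw, Complex.arg_real_mul _ (by positivity : (0:ℝ) < 2 * Real.sin (x / 2)),
          Complex.ofReal_cos, Complex.ofReal_sin, Complex.arg_cos_add_sin_mul_I]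
        constructor
        · linarith [Real.pi_pos]
        · linarith [Real.pi_pos]
      simp only [hF, Complex.neg_im, Complex.log_im]
      rw [harg]
      ring
    have := hcont.tendsto.mono_left (nhdsWithin_le_nhds (s := Set.Iio (1:ℝ)))
    rwa [hval] at this
  have : l = (π - x) / 2 := tendsto_nhds_unique (habel.congr' hev) hFlim
  rw [← this]
  exact hl2


private lemma sin_triple_prod (a b c : ℝ) :
    Real.sin a * Real.sin b * Real.sin c =
      (Real.sin (a + b - c) + Real.sin (b + c - a) + Real.sin (c + a - b)
        - Real.sin (a + b + c)) / 4 := by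
  simp only [Real.sin_add, Real.sin_sub, Real.cos_add, Real.cos_sub]
  ring

/-- On the support interval `α - β < θ < α + β` (and `θ < 2π - α - β`), the series
`∑_{m ≥ 1} sin (m α) sin (m β) sin (m θ) / m` converges to `π / 4`. -/
theorem sum_sin_sin_sin_div_eq_pi_div_four (α β θ : ℝ) (hβ0 : 0 < β) (hβα : β ≤ α)
    (hαπ : α < π) (h1 : α - β < θ) (h2 : θ < α + β) (h3 : θ < 2 * π - α - β) :
    Filter.Tendsto
      (fun N : ℕ => ∑ m ∈ Finset.Icc 1 N,
        Real.sin (m * α) * Real.sin (m * β) * Real.sin (m * θ) / m)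
      Filter.atTop (nhds (π / 4)) := by
  have hθ0 : 0 < θ := by linarith
  have hπ : 0 < π := Real.pi_pos
  have t1 := sawtooth (x := α + β - θ) (by linarith) (by linarith)
  have t2 := sawtooth (x := β + θ - α) (by linarith) (by linarith)
  have t3 := sawtooth (x := θ + α - β) (by linarith) (by linarith)
  have t4 := sawtooth (x := α + β + θ) (by linarith) (by linarith)
  have key : ∀ N : ℕ, ∑ m ∈ Finset.Icc 1 N,
      Real.sin (m * α) * Real.sin (m * β) * Real.sin (m * θ) / m
      = ((∑ m ∈ Finset.Icc 1 N, Real.sin (m * (α + β - θ)) / m)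
        + (∑ m ∈ Finset.Icc 1 N, Real.sin (m * (β + θ - α)) / m)
        + (∑ m ∈ Finset.Icc 1 N, Real.sin (m * (θ + α - β)) / m)
        - (∑ m ∈ Finset.Icc 1 N, Real.sin (m * (α + β + θ)) / m)) / 4 := by
    intro N
    rw [← Finset.sum_add_distrib, ← Finset.sum_add_distrib, ← Finset.sum_sub_distrib,
      Finset.sum_div]
    refine Finset.sum_congr rfl fun m _ => ?_
    rw [sin_triple_prod ((m : ℝ) * α) ((m : ℝ) * β) ((m : ℝ) * θ),
      show (m : ℝ) * α + m * β - m * θ = m * (α + β - θ) by ring,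
      show (m : ℝ) * β + m * θ - m * α = m * (β + θ - α) by ring,
      show (m : ℝ) * θ + m * α - m * β = m * (θ + α - β) by ring,
      show (m : ℝ) * α + m * β + m * θ = m * (α + β + θ) by ring]
    ring
  have hlim := (((t1.add t2).add t3).sub t4).div_const 4
  have : ((π - (α + β - θ)) / 2 + (π - (β + θ - α)) / 2 + (π - (θ + α - β)) / 2
      - (π - (α + β + θ)) / 2) / 4 = π / 4 := by ring
  rw [this] at hlim
  simpa only [key] using hlim
end

section
/- Let a, b ∈ SU(2) with 0 < |a₁₁| < 1 and 0 < |b₁₁| < 1, and set r(a) = |a₁₁|, r(b) = |b₁₁|, c₀ = r(a)²r(b)² + (1 − r(a)²)(1 − r(b)²), c₁ = 2 r(a) r(b) √((1 − r(a)²)(1 − r(b)²)). Let λ̂_a be the probability measure on SU(2) obtained as the pushforward of the uniform probability measure on [0,2π] × [0,2π] under (φ, ψ) ↦ k(φ)·a·k(ψ), and similarly λ̂_b. Then for every continuous function F : ℝ → ℝ, ∫ F(|g₁₁|) d(λ̂_a ∗ λ̂_b)(g) = ∫_{√(c₀−c₁)}^{√(c₀+c₁)} F(u) · (2u) / (π √(c₁²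 − (u² − c₀)²)) du. In particular the distribution of |g₁₁| under λ̂_a ∗ λ̂_b is absolutely continuous with the stated density. -/
open scoped Real
open Matrix MeasureTheory

noncomputable section

/-- `SU2` is the special unitary group of `2 × 2` complex matrices. -/
abbrev SU2 : Type := ↥(Matrix.specialUnitaryGroup (Fin 2) ℂ)

instance : Group SU2 :=
  { (inferInstance : Monoid SU2) with
    inv := fun A => ⟨star A.1,
      Submonoid.mem_inf.mpr
        ⟨Unitary.star_mem (Submonoid.mem_inf.mp A.2).1,
         by
          have h : A.1.det = 1 := (Submonoid.mem_inf.mp A.2).2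
          simp only [MonoidHom.mem_mker, Matrix.coe_detMonoidHom]
          rw [Matrix.star_eq_conjTranspose, Matrix.det_conjTranspose, h, star_one]⟩⟩
    inv_mul_cancel := fun A => Subtype.ext ((Submonoid.mem_inf.mp A.2).1.1 : star A.1 * A.1 = 1) }

instance : IsTopologicalGroup SU2 where
  continuous_mul := Continuous.subtype_mk
    ((continuous_subtype_val.comp continuous_fst).mul
      (continuous_subtype_val.comp continuous_snd)) _
  continuous_inv := Continuous.subtype_mk (continuous_star.comp continuous_subtype_val) _

attribute [local instance] Matrix.normedAddCommGroup Matrix.normedSpace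

instance : CompactSpace SU2 := by
  refine isCompact_iff_compactSpace.mp ?_
  have hclosed :
      IsClosed ((Matrix.specialUnitaryGroup (Fin 2) ℂ : Set (Matrix (Fin 2) (Fin 2) ℂ))) := by
    have : (Matrix.specialUnitaryGroup (Fin 2) ℂ : Set (Matrix (Fin 2) (Fin 2) ℂ))
        = {A | star A * A = 1} ∩ {A | A * star A = 1} ∩ {A | A.det = 1} := by
      ext A
      simp only [Set.mem_inter_iff, Set.mem_setOf_eq, SetLike.mem_coe,
        Matrix.mem_specialUnitaryGroup_iff]
      constructor
      · rintro ⟨⟨h1, h2⟩, h3⟩; exact ⟨⟨h1, h2⟩, h3⟩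
      · rintro ⟨⟨h1, h2⟩, h3⟩; exact ⟨⟨h1, h2⟩, h3⟩
    rw [this]
    refine (IsClosed.inter (IsClosed.inter ?_ ?_) ?_)
    · exact isClosed_eq (continuous_star.mul continuous_id) continuous_const
    · exact isClosed_eq (continuous_id.mul continuous_star) continuous_const
    · exact isClosed_eq (continuous_id.matrix_det) continuous_const
  have hbdd :
      Bornology.IsBounded
        ((Matrix.specialUnitaryGroup (Fin 2) ℂ : Set (Matrix (Fin 2) (Fin 2) ℂ))) := by
    refine Bornology.IsBounded.subset
      (Metric.isBounded_closedBall (x := (0 : Matrix (Fin 2) (Fin 2) ℂ)) (r := 1)) ?_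
    intro A hA
    rw [Metric.mem_closedBall, dist_zero_right]
    exact (Matrix.norm_le_iff zero_le_one).mpr fun i j =>
      entry_norm_bound_of_unitary (Matrix.mem_specialUnitaryGroup_iff.mp hA).1 i j
  exact Metric.isCompact_of_isClosed_isBounded hclosed hbdd

instance : MeasurableSpace SU2 := borel SU2
instance : BorelSpace SU2 := ⟨rfl⟩

/-- The diagonal matrix `diag (e^{iγ}, e^{-iγ})`. -/
def dmat (γ : ℝ) : Matrix (Fin 2) (Fin 2) ℂ :=
  !![Complex.exp (γ * Complex.I), 0; 0, Complex.exp (-γ * Complex.I)]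

lemma dmat_mem (γ : ℝ) : dmat γ ∈ Matrix.specialUnitaryGroup (Fin 2) ℂ := by
  have hdet : (dmat γ).det = 1 := by
    simp [dmat, Matrix.det_fin_two_of, ← Complex.exp_add]
  refine Submonoid.mem_inf.mpr ⟨?_, ?_⟩
  · constructor
    · ext i j
      fin_cases i <;> fin_cases j <;>
        simp [dmat, Matrix.mul_apply, Fin.sum_univ_two, Matrix.star_eq_conjTranspose,
          Matrix.conjTranspose_apply, ← Complex.exp_conj, ← Complex.exp_add,
          Complex.ext_iff, Complex.exp_re, Complex.exp_im]
    · ext i j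
      fin_cases i <;> fin_cases j <;>
        simp [dmat, Matrix.mul_apply, Fin.sum_univ_two, Matrix.star_eq_conjTranspose,
          Matrix.conjTranspose_apply, ← Complex.exp_conj, ← Complex.exp_add,
          Complex.ext_iff, Complex.exp_re, Complex.exp_im]
  · simpa [MonoidHom.mem_mker] using hdet

/-- The element `d(γ) = diag (e^{iγ}, e^{-iγ})` of `SU(2)`. -/
def dSU (γ : ℝ) : SU2 := ⟨dmat γ, dmat_mem γ⟩

/-- The normalized invariant measure on the spherical class `O_a = K a K ⊆ SU(2)`:
the pushforward of the uniform probability measure on `[0, 2π] × [0, 2π]` under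
`(φ, ψ) ↦ k(φ) · a · k(ψ)`. -/
def sphClassMeasure (a : SU2) : Measure SU2 :=
  Measure.map (fun p : ℝ × ℝ => dSU p.1 * a * dSU p.2)
    ((ENNReal.ofReal (4 * π ^ 2))⁻¹ •
      ((volume.restrict (Set.Icc (0 : ℝ) (2 * π))).prod
        (volume.restrict (Set.Icc (0 : ℝ) (2 * π)))))


instance : SecondCountableTopology (Matrix (Fin 2) (Fin 2) ℂ) :=
  (inferInstance : SecondCountableTopology (Fin 2 → Fin 2 → ℂ))

instance : SecondCountableTopology SU2 := TopologicalSpace.Subtype.secondCountableTopology _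

open Complex in
lemma continuous_dmat : Continuous dmat := by
  apply continuous_matrix
  intro i j
  fin_cases i <;> fin_cases j <;> simp [dmat] <;> fun_prop

lemma continuous_dSU : Continuous dSU :=
  Continuous.subtype_mk continuous_dmat _

lemma row_normSq (a : SU2) :
    Complex.normSq (a.1 0 0) + Complex.normSq (a.1 0 1) = 1 := by
  have h := ((Submonoid.mem_inf.mp a.2).1 : a.1 ∈ unitary _)
  have h2 : a.1 * star a.1 = 1 := (Unitary.mem_iff.mp h).2
  have h3 := congrArg (fun M => M 0 0) h2
  simp only [Matrix.mul_apply, Fin.sum_univ_two, Matrix.star_eq_conjTranspose,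
    Matrix.conjTranspose_apply, Matrix.one_apply_eq, Complex.star_def, Complex.mul_conj] at h3
  have := congrArg Complex.re h3
  simpa using this

lemma col_normSq (b : SU2) :
    Complex.normSq (b.1 0 0) + Complex.normSq (b.1 1 0) = 1 := by
  have h := ((Submonoid.mem_inf.mp b.2).1 : b.1 ∈ unitary _)
  have h2 : star b.1 * b.1 = 1 := (Unitary.mem_iff.mp h).1
  have h3 := congrArg (fun M => M 0 0) h2
  simp only [Matrix.mul_apply, Fin.sum_univ_two, Matrix.star_eq_conjTranspose,
    Matrix.conjTranspose_apply, Matrix.one_apply_eq, Complex.star_def] at h3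
  rw [mul_comm ((starRingEnd ℂ) (b.1 0 0)) (b.1 0 0),
      mul_comm ((starRingEnd ℂ) (b.1 1 0)) (b.1 1 0), Complex.mul_conj, Complex.mul_conj] at h3
  have := congrArg Complex.re h3
  simpa using this

lemma entry_eq (a b : SU2) (φ₁ ψ₁ φ₂ ψ₂ : ℝ) :
    ‖((dSU φ₁ * a * dSU ψ₁ * (dSU φ₂ * b * dSU ψ₂)) : SU2).1 0 0‖
      = ‖a.1 0 0 * b.1 0 0 * Complex.exp ((2*(ψ₁+φ₂) : ℝ) * Complex.I)
          + a.1 0 1 * b.1 1 0‖ := by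
  have E2 : Complex.exp ((2*(ψ₁+φ₂) : ℝ) * Complex.I)
      = Complex.exp (ψ₁*Complex.I) * Complex.exp (ψ₁*Complex.I)
        * Complex.exp (φ₂*Complex.I) * Complex.exp (φ₂*Complex.I) := by
    rw [← Complex.exp_add, ← Complex.exp_add, ← Complex.exp_add]
    congr 1; push_cast; ring
  have hval : ((dSU φ₁ * a * dSU ψ₁ * (dSU φ₂ * b * dSU ψ₂)) : SU2).1 0 0
      = Complex.exp (φ₁ * Complex.I) * Complex.exp (ψ₂ * Complex.I)
        * (Complex.exp (ψ₁*Complex.I))⁻¹ * (Complex.exp (φ₂*Complex.I))⁻¹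
        * (a.1 0 0 * b.1 0 0 * Complex.exp ((2*(ψ₁+φ₂) : ℝ) * Complex.I)
            + a.1 0 1 * b.1 1 0) := by
    show (dmat φ₁ * a.1 * dmat ψ₁ * (dmat φ₂ * b.1 * dmat ψ₂)) 0 0 = _
    rw [E2]
    simp only [dmat, Matrix.mul_apply, Fin.sum_univ_two, Matrix.cons_val', Matrix.cons_val_zero,
      Matrix.cons_val_one, Matrix.head_cons, Matrix.empty_val', Matrix.cons_val_fin_one,
      Matrix.head_fin_const, Matrix.of_apply]
    simp only [neg_mul, Complex.exp_neg]
    have h1 := Complex.exp_ne_zero ((ψ₁:ℂ) * Complex.I)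
    have h2 := Complex.exp_ne_zero ((φ₂:ℂ) * Complex.I)
    field_simp
    ring
  rw [hval]
  simp [norm_mul, norm_inv, Complex.norm_exp_ofReal_mul_I]
lemma abs_to_cos (a b : SU2) (c₀ c₁ : ℝ)
    (hc₀ : c₀ = ‖a.1 0 0‖ ^ 2 * ‖b.1 0 0‖ ^ 2
        + (1 - ‖a.1 0 0‖ ^ 2) * (1 - ‖b.1 0 0‖ ^ 2))
    (hc₁ : c₁ = 2 * ‖a.1 0 0‖ * ‖b.1 0 0‖
        * Real.sqrt ((1 - ‖a.1 0 0‖ ^ 2) * (1 - ‖b.1 0 0‖ ^ 2)))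
    (δ : ℝ) :
    ‖a.1 0 0 * b.1 0 0 * Complex.exp ((2*δ : ℝ) * Complex.I)
        + a.1 0 1 * b.1 1 0‖
      = Real.sqrt (c₀ + c₁ * Real.cos (2*δ
          + (a.1 0 0 * b.1 0 0 * (starRingEnd ℂ) (a.1 0 1 * b.1 1 0)).arg)) := by
  set w : ℂ := a.1 0 0 * b.1 0 0 * (starRingEnd ℂ) (a.1 0 1 * b.1 1 0) with hw
  have ha01 : Complex.normSq (a.1 0 1) = 1 - ‖a.1 0 0‖ ^ 2 := by
    have h := row_normSq a
    rw [← Complex.sq_norm (a.1 0 0)] at h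
    linarith
  have hb10 : Complex.normSq (b.1 1 0) = 1 - ‖b.1 0 0‖ ^ 2 := by
    have h := col_normSq b
    rw [← Complex.sq_norm (b.1 0 0)] at h
    linarith
  have h1a : (0:ℝ) ≤ 1 - ‖a.1 0 0‖ ^ 2 := by
    rw [← ha01]; exact Complex.normSq_nonneg _
  have h1b : (0:ℝ) ≤ 1 - ‖b.1 0 0‖ ^ 2 := by
    rw [← hb10]; exact Complex.normSq_nonneg _
  have ha01' : ‖a.1 0 1‖ = Real.sqrt (1 - ‖a.1 0 0‖ ^ 2) := by
    rw [← ha01, Complex.norm_def]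
  have hb10' : ‖b.1 1 0‖ = Real.sqrt (1 - ‖b.1 0 0‖ ^ 2) := by
    rw [← hb10, Complex.norm_def]
  have habsw : ‖w‖ = ‖a.1 0 0‖ * ‖b.1 0 0‖
      * Real.sqrt ((1 - ‖a.1 0 0‖ ^ 2) * (1 - ‖b.1 0 0‖ ^ 2)) := by
    rw [hw, norm_mul, norm_mul, Complex.norm_conj, norm_mul, ha01', hb10',
      Real.sqrt_mul h1a]
  have harg : ((2*δ:ℝ):ℂ) * Complex.I + (w.arg:ℂ) * Complex.I
      = ((2*δ + w.arg : ℝ):ℂ) * Complex.I := by push_cast; ring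
  have key : a.1 0 0 * b.1 0 0 * Complex.exp ((2*δ:ℝ) * Complex.I)
      * (starRingEnd ℂ) (a.1 0 1 * b.1 1 0)
      = (‖w‖ : ℂ) * Complex.exp (((2*δ + w.arg : ℝ):ℂ) * Complex.I) := by
    calc a.1 0 0 * b.1 0 0 * Complex.exp ((2*δ:ℝ) * Complex.I)
        * (starRingEnd ℂ) (a.1 0 1 * b.1 1 0)
        = Complex.exp ((2*δ:ℝ) * Complex.I) * w := by rw [hw]; ring
      _ = Complex.exp ((2*δ:ℝ) * Complex.I)
            * ((‖w‖ : ℂ) * Complex.exp ((w.arg:ℂ) * Complex.I)) := by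
          conv_lhs => rw [← Complex.norm_mul_exp_arg_mul_I w]
      _ = (‖w‖ : ℂ)
            * (Complex.exp ((2*δ:ℝ) * Complex.I) * Complex.exp ((w.arg:ℂ) * Complex.I)) := by
          ring
      _ = (‖w‖ : ℂ) * Complex.exp (((2*δ + w.arg : ℝ):ℂ) * Complex.I) := by
          rw [← Complex.exp_add, harg]
  have hre : (a.1 0 0 * b.1 0 0 * Complex.exp ((2*δ : ℝ) * Complex.I)
      * (starRingEnd ℂ) (a.1 0 1 * b.1 1 0)).re
      = ‖w‖ * Real.cos (2*δ + w.arg) := by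
    rw [key, Complex.re_ofReal_mul, Complex.exp_ofReal_mul_I_re]
  have hexp : Complex.normSq (Complex.exp ((2*δ : ℝ) * Complex.I)) = 1 := by
    rw [← Complex.sq_norm, Complex.norm_exp_ofReal_mul_I, one_pow]
  rw [Complex.norm_def, Complex.normSq_add]
  congr 1
  rw [Complex.normSq_mul, Complex.normSq_mul, Complex.normSq_mul, hexp, hre, habsw,
    ha01, hb10, Complex.normSq_eq_norm_sq, Complex.normSq_eq_norm_sq, hc₀, hc₁]
  ring
lemma subst_lemma (c₀ c₁ : ℝ) (hc1 : 0 < c₁) (hge : c₁ ≤ c₀) (F : ℝ → ℝ) (hF : Continuous F) :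
    ∫ u in Real.sqrt (c₀ - c₁)..Real.sqrt (c₀ + c₁),
        F u * (2 * u) / (π * Real.sqrt (c₁ ^ 2 - (u ^ 2 - c₀) ^ 2))
      = (∫ θ in (0:ℝ)..π, F (Real.sqrt (c₀ + c₁ * Real.cos θ))) / π := by
  set f : ℝ → ℝ := fun θ => Real.sqrt (c₀ + c₁ * Real.cos θ) with hf
  set f' : ℝ → ℝ := fun θ => 1 / (2 * Real.sqrt (c₀ + c₁ * Real.cos θ)) * (c₁ * (-Real.sin θ))
    with hf'
  have hsub : (0:ℝ) ≤ c₀ - c₁ := by linarith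
  have hpos : ∀ θ ∈ Set.Ioo (0:ℝ) π, 0 < c₀ + c₁ * Real.cos θ := by
    intro θ hθ
    have h1 : Real.cos π < Real.cos θ := by
      refine Real.strictAntiOn_cos ⟨le_of_lt hθ.1, le_of_lt (lt_of_lt_of_le hθ.2 le_rfl)⟩
        ⟨Real.pi_pos.le, le_rfl⟩ hθ.2
    rw [Real.cos_pi] at h1
    nlinarith
  have hderiv : ∀ θ ∈ Set.Ioo (0:ℝ) π, HasDerivWithinAt f (f' θ) (Set.Ioo 0 π) θ := by
    intro θ hθ
    have h := (Real.hasDerivAt_sqrt (ne_of_gt (hpos θ hθ))).comp θ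
      (((Real.hasDerivAt_cos θ).const_mul c₁).const_add c₀)
    exact h.hasDerivWithinAt
  have hinj : Set.InjOn f (Set.Ioo 0 π) := by
    intro x hx y hy hxy
    have hx2 : c₀ + c₁ * Real.cos x = c₀ + c₁ * Real.cos y := by
      have := congrArg (fun t => t ^ 2) hxy
      simpa [hf, Real.sq_sqrt (hpos x hx).le, Real.sq_sqrt (hpos y hy).le] using this
    have hcos : Real.cos x = Real.cos y := by
      have := hx2; nlinarith
    exact Real.strictAntiOn_cos.injOn ⟨hx.1.le, hx.2.le⟩ ⟨hy.1.le, hy.2.le⟩ hcos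
  have hcont : ContinuousOn f (Set.Icc 0 π) :=
    (Real.continuous_sqrt.comp (continuous_const.add
      (continuous_const.mul Real.continuous_cos))).continuousOn
  have hf0 : f 0 = Real.sqrt (c₀ + c₁) := by
    simp only [hf, Real.cos_zero, mul_one]
  have hfpi : f π = Real.sqrt (c₀ - c₁) := by
    simp only [hf, Real.cos_pi, mul_neg_one]
    rw [← sub_eq_add_neg]
  have himage : f '' Set.Ioo 0 π = Set.Ioo (Real.sqrt (c₀ - c₁)) (Real.sqrt (c₀ + c₁)) := by
    apply Set.Subset.antisymm
    · rintro u ⟨θ, hθ, rfl⟩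
      constructor
      · rw [← hfpi]
        apply Real.sqrt_lt_sqrt
        · rw [hfpi] at *
          simpa [Real.cos_pi] using (by nlinarith [Real.cos_pi] : (0:ℝ) ≤ c₀ + c₁ * (-1))
        · have h1 : Real.cos π < Real.cos θ :=
            Real.strictAntiOn_cos ⟨hθ.1.le, hθ.2.le⟩ ⟨Real.pi_pos.le, le_rfl⟩ hθ.2
          rw [Real.cos_pi] at h1
          simp only [hf, Real.cos_pi]
          nlinarith
      · rw [← hf0]
        apply Real.sqrt_lt_sqrt
        · exact (hpos θ hθ).le
        · have h1 : Real.cos θ < Real.cos 0 :=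
            Real.strictAntiOn_cos ⟨le_refl 0, Real.pi_pos.le⟩ ⟨hθ.1.le, hθ.2.le⟩ hθ.1
          rw [Real.cos_zero] at h1
          simp only [hf, Real.cos_zero, mul_one]
          nlinarith
    · rw [← hf0, ← hfpi]
      exact intermediate_value_Ioo' Real.pi_pos.le hcont
  have hchg := MeasureTheory.integral_image_eq_integral_abs_deriv_smul measurableSet_Ioo
    hderiv hinj (fun u => F u * (2 * u) / (π * Real.sqrt (c₁ ^ 2 - (u ^ 2 - c₀) ^ 2)))
  rw [himage] at hchg
  have hAB : Real.sqrt (c₀ - c₁) ≤ Real.sqrt (c₀ + c₁) :=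
    Real.sqrt_le_sqrt (by linarith)
  rw [intervalIntegral.integral_of_le hAB, MeasureTheory.integral_Ioc_eq_integral_Ioo, hchg]
  have hcongr : ∀ θ ∈ Set.Ioo (0:ℝ) π,
      |f' θ| • (F (f θ) * (2 * f θ) / (π * Real.sqrt (c₁ ^ 2 - ((f θ) ^ 2 - c₀) ^ 2)))
        = F (f θ) / π := by
    intro θ hθ
    have hp := hpos θ hθ
    have hsin : 0 < Real.sin θ := Real.sin_pos_of_pos_of_lt_pi hθ.1 hθ.2
    have hsq : (f θ) ^ 2 = c₀ + c₁ * Real.cos θ := Real.sq_sqrt hp.le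
    have hfθ : 0 < f θ := Real.sqrt_pos.mpr hp
    have hden : Real.sqrt (c₁ ^ 2 - ((f θ) ^ 2 - c₀) ^ 2) = c₁ * Real.sin θ := by
      rw [hsq]
      have : c₁ ^ 2 - (c₀ + c₁ * Real.cos θ - c₀) ^ 2 = (c₁ * Real.sin θ) ^ 2 := by
        have := Real.sin_sq_add_cos_sq θ
        nlinarith
      rw [this, Real.sqrt_sq (by positivity)]
    have habs : |f' θ| = c₁ * Real.sin θ / (2 * f θ) := by
      simp only [hf']
      rw [abs_of_nonpos (by
        have : (0:ℝ) < 2 * Real.sqrt (c₀ + c₁ * Real.cos θ) := by positivity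
        have h2 : c₁ * (-Real.sin θ) ≤ 0 := by nlinarith
        exact mul_nonpos_of_nonneg_of_nonpos (by positivity) h2)]
      field_simp [hf]
      rfl
    rw [hden, habs, smul_eq_mul]
    have hπ : (0:ℝ) < π := Real.pi_pos
    field_simp
  rw [MeasureTheory.setIntegral_congr_fun measurableSet_Ioo hcongr]
  rw [intervalIntegral.integral_of_le Real.pi_pos.le, MeasureTheory.integral_Ioc_eq_integral_Ioo]
  rw [MeasureTheory.integral_div]
lemma prod_smul_smul {X Y : Type*} [MeasurableSpace X] [MeasurableSpace Y]
    (c d : ENNReal) (hc : c ≠ ⊤) (hd : d ≠ ⊤) (μ : Measure X) (ν : Measure Y)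
    [IsFiniteMeasure μ] [IsFiniteMeasure ν] :
    (c • μ).prod (d • ν) = (c * d) • (μ.prod ν) := by
  haveI : IsFiniteMeasure (d • ν) := by
    constructor
    rw [Measure.smul_apply, smul_eq_mul]
    exact ENNReal.mul_lt_top hd.lt_top (measure_lt_top ν _)
  haveI : IsFiniteMeasure (c • μ) := by
    constructor
    rw [Measure.smul_apply, smul_eq_mul]
    exact ENNReal.mul_lt_top hc.lt_top (measure_lt_top μ _)
  refine (Measure.prod_eq (μ := c • μ) (ν := d • ν) (μν := (c * d) • μ.prod ν) fun s t hs ht => ?_)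
  simp only [Measure.smul_apply, smul_eq_mul, Measure.prod_prod]
  ring

lemma measure_Icc_two_pi : (volume.restrict (Set.Icc (0:ℝ) (2*π))) Set.univ
    = ENNReal.ofReal (2*π) := by
  rw [Measure.restrict_apply_univ, Real.volume_Icc]
  norm_num

instance : IsFiniteMeasure (volume.restrict (Set.Icc (0:ℝ) (2*π))) := by
  constructor
  rw [measure_Icc_two_pi]
  exact ENNReal.ofReal_lt_top
lemma trig_reduce (c₀ c₁ α : ℝ) (F : ℝ → ℝ) (hF : Continuous F) :
    ∫ δ in (0:ℝ)..(2*π), F (Real.sqrt (c₀ + c₁ * Real.cos (2*δ + α)))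
      = 2 * ∫ θ in (0:ℝ)..π, F (Real.sqrt (c₀ + c₁ * Real.cos θ)) := by
  set H : ℝ → ℝ := fun θ => F (Real.sqrt (c₀ + c₁ * Real.cos θ)) with hH
  have hHcont : Continuous H :=
    hF.comp (Real.continuous_sqrt.comp (continuous_const.add
      (continuous_const.mul Real.continuous_cos)))
  have hHper : Function.Periodic H (2*π) := fun x => by
    simp only [hH, Real.cos_add_two_pi]
  have hHint : ∀ u v : ℝ, IntervalIntegrable H volume u v := fun u v =>
    hHcont.intervalIntegrable u v
  have h2 : (2:ℝ) • ∫ δ in (0:ℝ)..(2*π), H (2*δ+α)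
      = ∫ x in (2*0+α)..(2*(2*π)+α), H x :=
    intervalIntegral.smul_integral_comp_mul_add H 2 α
  rw [show (2:ℝ)*0+α = α by ring, show 2*(2*π)+α = (α+2*π)+2*π by ring] at h2
  have hsplit : (∫ x in α..(α+2*π), H x) + (∫ x in (α+2*π)..((α+2*π)+2*π), H x)
      = ∫ x in α..((α+2*π)+2*π), H x :=
    intervalIntegral.integral_add_adjacent_intervals (hHint _ _) (hHint _ _)
  have e1 : (∫ x in α..(α+2*π), H x) = ∫ x in (0:ℝ)..(0+2*π), H x :=
    hHper.intervalIntegral_add_eq α 0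
  have e2 : (∫ x in (α+2*π)..((α+2*π)+2*π), H x) = ∫ x in (0:ℝ)..(0+2*π), H x :=
    hHper.intervalIntegral_add_eq (α+2*π) 0
  have hK : ∫ δ in (0:ℝ)..(2*π), H (2*δ+α) = ∫ x in (0:ℝ)..(2*π), H x := by
    have := h2
    rw [← hsplit, e1, e2, zero_add, smul_eq_mul] at this
    linarith [this]
  have hrefl : (∫ θ in π..(2*π), H θ) = ∫ θ in (0:ℝ)..π, H θ := by
    have hc := intervalIntegral.integral_comp_sub_left (a := (0:ℝ)) (b := π) H (2*π)
    rw [show 2*π - π = π by ring, show 2*π - 0 = 2*π by ring] at hc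
    rw [← hc]
    apply intervalIntegral.integral_congr
    intro x hx
    simp only [hH, Real.cos_two_pi_sub]
  have hs2 : (∫ θ in (0:ℝ)..π, H θ) + (∫ θ in π..(2*π), H θ) = ∫ θ in (0:ℝ)..(2*π), H θ :=
    intervalIntegral.integral_add_adjacent_intervals (hHint _ _) (hHint _ _)
  have : (∫ δ in (0:ℝ)..(2*π), H (2*δ+α)) = 2 * ∫ θ in (0:ℝ)..π, H θ := by
    rw [hK, ← hs2, hrefl]; ring
  simpa only [hH] using this
theorem sphClass_conv_density' (a b : SU2)
    (ha0 : 0 < ‖a.1 0 0‖) (ha1 : ‖a.1 0 0‖ < 1)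
    (hb0 : 0 < ‖b.1 0 0‖) (hb1 : ‖b.1 0 0‖ < 1)
    (c₀ c₁ : ℝ)
    (hc₀ : c₀ = ‖a.1 0 0‖ ^ 2 * ‖b.1 0 0‖ ^ 2
        + (1 - ‖a.1 0 0‖ ^ 2) * (1 - ‖b.1 0 0‖ ^ 2))
    (hc₁ : c₁ = 2 * ‖a.1 0 0‖ * ‖b.1 0 0‖
        * Real.sqrt ((1 - ‖a.1 0 0‖ ^ 2) * (1 - ‖b.1 0 0‖ ^ 2)))
    (F : ℝ → ℝ) (hF : Continuous F) :
    ∫ g, F (‖(g : Matrix (Fin 2) (Fin 2) ℂ) 0 0‖)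
        ∂((sphClassMeasure a).mconv (sphClassMeasure b))
      = ∫ u in Real.sqrt (c₀ - c₁)..Real.sqrt (c₀ + c₁),
          F u * (2 * u) / (π * Real.sqrt (c₁ ^ 2 - (u ^ 2 - c₀) ^ 2)) := by
  have h1a : (0:ℝ) < 1 - ‖a.1 0 0‖^2 := by nlinarith
  have h1b : (0:ℝ) < 1 - ‖b.1 0 0‖^2 := by nlinarith
  have hc1pos : 0 < c₁ := by
    rw [hc₁]
    exact mul_pos (mul_pos (mul_pos two_pos ha0) hb0)
      (Real.sqrt_pos.mpr (mul_pos h1a h1b))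
  have hgele : c₁ ≤ c₀ := by
    have hs := Real.sq_sqrt (mul_pos h1a h1b).le
    rw [hc₀, hc₁]
    nlinarith [sq_nonneg (‖a.1 0 0‖ * ‖b.1 0 0‖
      - Real.sqrt ((1 - ‖a.1 0 0‖^2) * (1 - ‖b.1 0 0‖^2)))]
  set α : ℝ := (a.1 0 0 * b.1 0 0 * (starRingEnd ℂ) (a.1 0 1 * b.1 1 0)).arg with hα
  set I2 : Set ℝ := Set.Icc 0 (2*π) with hI2
  set ρ : Measure ℝ := volume.restrict I2 with hρ
  set m : Measure (ℝ×ℝ) := ρ.prod ρ with hm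
  set cst : ENNReal := (ENNReal.ofReal (4*π^2))⁻¹ with hcst
  have hcstne : cst ≠ ⊤ := by
    rw [hcst]
    exact ENNReal.inv_ne_top.mpr (by
      simp only [ne_eq, ENNReal.ofReal_eq_zero, not_le]
      positivity)
  haveI : IsFiniteMeasure ρ := by
    constructor
    rw [hρ, measure_Icc_two_pi]
    exact ENNReal.ofReal_lt_top
  haveI hPfin : IsFiniteMeasure (cst • m) := by
    constructor
    rw [Measure.smul_apply, smul_eq_mul]
    exact ENNReal.mul_lt_top hcstne.lt_top (measure_lt_top _ _)
  set Ta : ℝ×ℝ → SU2 := fun p => dSU p.1 * a * dSU p.2 with hTa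
  set Tb : ℝ×ℝ → SU2 := fun p => dSU p.1 * b * dSU p.2 with hTb
  have hTac : Continuous Ta :=
    ((continuous_dSU.comp continuous_fst).mul continuous_const).mul
      (continuous_dSU.comp continuous_snd)
  have hTbc : Continuous Tb :=
    ((continuous_dSU.comp continuous_fst).mul continuous_const).mul
      (continuous_dSU.comp continuous_snd)
  have hfc : Continuous (fun g : SU2 => F (‖g.1 0 0‖)) :=
    hF.comp (continuous_norm.comp ((continuous_apply (0 : Fin 2)).comp
      ((continuous_apply (0 : Fin 2)).comp continuous_subtype_val)))
  have hμa : sphClassMeasure a = Measure.map Ta (cst • m) := rfl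
  have hμb : sphClassMeasure b = Measure.map Tb (cst • m) := rfl
  have hmul_meas : Measurable (fun p : SU2 × SU2 => p.1 * p.2) :=
    continuous_mul.measurable
  have hΦc : Continuous ((fun p : SU2 × SU2 => p.1 * p.2) ∘ Prod.map Ta Tb) :=
    continuous_mul.comp (hTac.prodMap hTbc)
  have key : (sphClassMeasure a).mconv (sphClassMeasure b)
      = Measure.map ((fun p : SU2 × SU2 => p.1 * p.2) ∘ Prod.map Ta Tb)
          ((cst*cst) • (m.prod m)) := by
    rw [Measure.mconv, hμa, hμb,
      Measure.map_prod_map _ _ hTac.measurable hTbc.measurable,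
      prod_smul_smul _ _ hcstne hcstne,
      Measure.map_map hmul_meas (hTac.prodMap hTbc).measurable]
  rw [key, MeasureTheory.integral_map hΦc.measurable.aemeasurable
    hfc.aestronglyMeasurable, MeasureTheory.integral_smul_measure]
  set G : ℝ → ℝ := fun δ => F (Real.sqrt (c₀ + c₁ * Real.cos (2*δ + α))) with hG
  have hGcont : Continuous G := by
    apply hF.comp
    apply Real.continuous_sqrt.comp
    apply continuous_const.add
    apply continuous_const.mul
    exact Real.continuous_cos.comp ((continuous_const.mul continuous_id).add continuous_const)
  have hGper : Function.Periodic G (2*π) := by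
    intro x
    simp only [hG]
    rw [show 2*(x+2*π)+α = 2*x+α + 2*π + 2*π by ring, Real.cos_add_two_pi,
      Real.cos_add_two_pi]
  have hpt : (fun q : (ℝ×ℝ)×(ℝ×ℝ) =>
      (fun g : SU2 => F (‖g.1 0 0‖))
        (((fun p : SU2 × SU2 => p.1 * p.2) ∘ Prod.map Ta Tb) q))
      = fun q => G (q.1.2 + q.2.1) := by
    funext q
    show F (‖((dSU q.1.1 * a * dSU q.1.2 * (dSU q.2.1 * b * dSU q.2.2)) : SU2).1 0 0‖)
      = G (q.1.2 + q.2.1)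
    rw [entry_eq a b q.1.1 q.1.2 q.2.1 q.2.2, abs_to_cos a b c₀ c₁ hc₀ hc₁ (q.1.2 + q.2.1),
      ← hα]
  rw [hpt]
  -- Fubini
  have hmr : m = (volume : Measure (ℝ×ℝ)).restrict (I2 ×ˢ I2) := by
    rw [hm, hρ, Measure.prod_restrict, ← Measure.volume_eq_prod]
  have hmm : m.prod m
      = (volume : Measure ((ℝ×ℝ)×(ℝ×ℝ))).restrict ((I2 ×ˢ I2) ×ˢ (I2 ×ˢ I2)) := by
    rw [hmr, Measure.prod_restrict, ← Measure.volume_eq_prod]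
  have hcomp2 : IsCompact (I2 ×ˢ I2) := isCompact_Icc.prod isCompact_Icc
  have hint4 : Integrable (fun q : (ℝ×ℝ)×(ℝ×ℝ) => G (q.1.2 + q.2.1)) (m.prod m) := by
    rw [hmm]
    exact ((hGcont.comp ((continuous_snd.comp continuous_fst).add
      (continuous_fst.comp continuous_snd))).continuousOn).integrableOn_compact
      (hcomp2.prod hcomp2)
  rw [MeasureTheory.integral_prod _ hint4]
  have hρuniv : (ρ Set.univ).toReal = 2*π := by
    rw [hρ, measure_Icc_two_pi, ENNReal.toReal_ofReal (by positivity)]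
  set K : ℝ := ∫ θ in (0:ℝ)..(2*π), G θ with hK
  have hshift : ∀ t : ℝ, (∫ x, G (t + x) ∂ρ) = K := by
    intro t
    rw [hρ, hI2, MeasureTheory.integral_Icc_eq_integral_Ioc,
      ← intervalIntegral.integral_of_le (by positivity : (0:ℝ) ≤ 2*π),
      intervalIntegral.integral_comp_add_left G t, add_zero]
    rw [hGper.intervalIntegral_add_eq t 0, zero_add, hK]
  have hinner : ∀ t : ℝ, (∫ p' : ℝ×ℝ, G (t + p'.1) ∂m) = (2*π) * K := by
    intro t
    have hint2 : Integrable (fun p' : ℝ×ℝ => G (t + p'.1)) m := by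
      rw [hmr]
      exact ((hGcont.comp (continuous_const.add continuous_fst)).continuousOn
        ).integrableOn_compact hcomp2
    rw [hm, MeasureTheory.integral_prod _ (by rw [← hm]; exact hint2)]
    simp only [MeasureTheory.integral_const]
    rw [MeasureTheory.integral_smul, hshift t, measureReal_def, hρuniv, smul_eq_mul]
  have houter : (∫ p : ℝ×ℝ, (∫ p' : ℝ×ℝ, G (p.2 + p'.1) ∂m) ∂m) = (2*π) * ((2*π) * ((2*π) * K)) := by
    have : (fun p : ℝ×ℝ => (∫ p' : ℝ×ℝ, G (p.2 + p'.1) ∂m)) = fun p => (2*π) * K := by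
      funext p; exact hinner p.2
    rw [this, MeasureTheory.integral_const]
    rw [hm, ← Set.univ_prod_univ, measureReal_def, Measure.prod_prod, ENNReal.toReal_mul, hρuniv, smul_eq_mul]
    ring
  simp only [houter]
  have hKval : K = 2 * ∫ θ in (0:ℝ)..π, F (Real.sqrt (c₀ + c₁ * Real.cos θ)) := by
    rw [hK, hG]
    exact trig_reduce c₀ c₁ α F hF
  rw [subst_lemma c₀ c₁ hc1pos hgele F hF, hKval]
  have hcstval : (cst * cst).toReal = (4*π^2)⁻¹ * (4*π^2)⁻¹ := by
    rw [ENNReal.toReal_mul, hcst, ENNReal.toReal_inv,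
      ENNReal.toReal_ofReal (by positivity : (0:ℝ) ≤ 4*π^2)]
  rw [hcstval, smul_eq_mul]
  have hπ : (0:ℝ) < π := Real.pi_pos
  field_simp
  ring

/-- Product formula for spherical classes in `SU(2)`: the distribution of `|g₁₁|` under the
convolution of two normalized spherical measures has the stated density. -/
theorem sphClass_conv_density (a b : SU2)
    (ha0 : 0 < ‖a.1 0 0‖) (ha1 : ‖a.1 0 0‖ < 1)
    (hb0 : 0 < ‖b.1 0 0‖) (hb1 : ‖b.1 0 0‖ < 1)
    (c₀ c₁ : ℝ)
    (hc₀ : c₀ = ‖a.1 0 0‖ ^ 2 * ‖b.1 0 0‖ ^ 2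
        + (1 - ‖a.1 0 0‖ ^ 2) * (1 - ‖b.1 0 0‖ ^ 2))
    (hc₁ : c₁ = 2 * ‖a.1 0 0‖ * ‖b.1 0 0‖
        * Real.sqrt ((1 - ‖a.1 0 0‖ ^ 2) * (1 - ‖b.1 0 0‖ ^ 2)))
    (F : ℝ → ℝ) (hF : Continuous F) :
    ∫ g, F (‖(g : Matrix (Fin 2) (Fin 2) ℂ) 0 0‖)
        ∂((sphClassMeasure a).mconv (sphClassMeasure b))
      = ∫ u in Real.sqrt (c₀ - c₁)..Real.sqrt (c₀ + c₁),
          F u * (2 * u) / (π * Real.sqrt (c₁ ^ 2 - (u ^ 2 - c₀) ^ 2)) := by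
  exact sphClass_conv_density' a b ha0 ha1 hb0 hb1 c₀ c₁ hc₀ hc₁ F hF
end
end

section
/- Let a, b ∈ SU(2), set r(a) = |a₁₁|, r(b) = |b₁₁|, c₀ = r(a)²r(b)² + (1 − r(a)²)(1 − r(b)²), and c₁ = 2 r(a) r(b) √((1 − r(a)²)(1 − r(b)²)). Then there exists δ ∈ ℝ such that for all φ ∈ ℝ, |(a·k(φ)·b)₁₁|² = c₀ + c₁ cos(2φ + δ), where k(φ) = diag(e^{iφ}, e^{−iφ}) and (·)₁₁ denotes the (1,1) matrix entry. -/
open Matrix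

noncomputable section

/-- The diagonal matrix `k(φ) = diag (e^{iφ}, e^{-iφ})`. -/
def kmat (φ : ℝ) : Matrix (Fin 2) (Fin 2) ℂ :=
  !![Complex.exp (φ * Complex.I), 0; 0, Complex.exp (-φ * Complex.I)]

/-- The squared modulus of the `(1,1)` entry of `a · k(φ) · b` for `a, b ∈ SU(2)` equals
`c₀ + c₁ cos (2φ + δ)` for some phase `δ`. -/
theorem abs_sq_entry_mul_kmat_mul (a b : SU2)
    (c₀ c₁ : ℝ)
    (hc₀ : c₀ = ‖a.1 0 0‖ ^ 2 * ‖b.1 0 0‖ ^ 2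
        + (1 - ‖a.1 0 0‖ ^ 2) * (1 - ‖b.1 0 0‖ ^ 2))
    (hc₁ : c₁ = 2 * ‖a.1 0 0‖ * ‖b.1 0 0‖
        * Real.sqrt ((1 - ‖a.1 0 0‖ ^ 2) * (1 - ‖b.1 0 0‖ ^ 2))) :
    ∃ δ : ℝ, ∀ φ : ℝ,
      ‖(a.1 * kmat φ * b.1) 0 0‖ ^ 2 = c₀ + c₁ * Real.cos (2 * φ + δ) := by
  set z : ℂ := a.1 0 0 * b.1 0 0 with hz
  set w : ℂ := a.1 0 1 * b.1 1 0 with hw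
  set u : ℂ := z * (starRingEnd ℂ) w with hu
  have hau : a.1 * star a.1 = 1 := (Matrix.mem_unitaryGroup_iff).mp a.2.1
  have hbu : star b.1 * b.1 = 1 := (Matrix.mem_unitaryGroup_iff').mp b.2.1
  have ha1 : ‖a.1 0 1‖ ^ 2 = 1 - ‖a.1 0 0‖ ^ 2 := by
    have h := congrFun (congrFun hau 0) 0
    simp [Matrix.mul_apply, Fin.sum_univ_two, Matrix.star_apply] at h
    rw [Complex.mul_conj, Complex.mul_conj] at h
    have h2 := congrArg Complex.re h
    simp at h2
    simp [← Complex.sq_norm] at h2 ⊢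
    linarith
  have hb1 : ‖b.1 1 0‖ ^ 2 = 1 - ‖b.1 0 0‖ ^ 2 := by
    have h := congrFun (congrFun hbu 0) 0
    simp [Matrix.mul_apply, Fin.sum_univ_two, Matrix.star_apply] at h
    rw [mul_comm ((starRingEnd ℂ) (b.1 0 0)), mul_comm ((starRingEnd ℂ) (b.1 1 0)),
      Complex.mul_conj, Complex.mul_conj] at h
    have h2 := congrArg Complex.re h
    simp at h2
    simp [← Complex.sq_norm] at h2 ⊢
    linarith
  have habs : ‖u‖ = ‖a.1 0 0‖ * ‖b.1 0 0‖
      * Real.sqrt ((1 - ‖a.1 0 0‖ ^ 2) * (1 - ‖b.1 0 0‖ ^ 2)) := by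
    rw [← ha1, ← hb1, ← mul_pow, Real.sqrt_sq (by positivity)]
    simp [hu, hz, hw]
  have hns : ∀ t : ℝ, Complex.normSq (Complex.exp ((t : ℂ) * Complex.I)) = 1 := by
    intro t
    rw [Complex.normSq_eq_norm_sq, Complex.norm_exp_ofReal_mul_I]; norm_num
  refine ⟨u.arg, fun φ => ?_⟩
  have hentry : (a.1 * kmat φ * b.1) 0 0
      = z * Complex.exp (φ * Complex.I) + w * Complex.exp (-φ * Complex.I) := by
    simp [Matrix.mul_apply, Fin.sum_univ_two, kmat, hz, hw]
    ring
  rw [hentry, Complex.sq_norm, Complex.normSq_add]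
  have e1 : Complex.normSq (z * Complex.exp (φ * Complex.I)) = Complex.normSq z := by
    rw [Complex.normSq_mul, hns φ, mul_one]
  have e2 : Complex.normSq (w * Complex.exp (-φ * Complex.I)) = Complex.normSq w := by
    rw [Complex.normSq_mul,
      show (-↑φ * Complex.I : ℂ) = ((-φ : ℝ) : ℂ) * Complex.I by push_cast; ring,
      hns (-φ), mul_one]
  have e3 : (z * Complex.exp (φ * Complex.I) *
      (starRingEnd ℂ) (w * Complex.exp (-φ * Complex.I))).re
      = ‖u‖ * Real.cos (2 * φ + u.arg) := by
    have hc : (starRingEnd ℂ) (Complex.exp (-φ * Complex.I)) = Complex.exp (φ * Complex.I) := by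
      rw [← Complex.exp_conj]
      simp
    rw [_root_.map_mul, hc]
    have h4 : z * Complex.exp (φ * Complex.I) * ((starRingEnd ℂ) w * Complex.exp (φ * Complex.I))
        = u * Complex.exp (((2 * φ : ℝ) : ℂ) * Complex.I) := by
      rw [hu, show (((2 * φ : ℝ)) : ℂ) * Complex.I
          = ↑φ * Complex.I + ↑φ * Complex.I by push_cast; ring, Complex.exp_add]
      ring
    rw [h4]
    conv_lhs => rw [← Complex.norm_mul_exp_arg_mul_I u]
    rw [mul_assoc, ← Complex.exp_add,
      show (↑u.arg * Complex.I + ((2 * φ : ℝ) : ℂ) * Complex.I)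
        = ((2 * φ + u.arg : ℝ) : ℂ) * Complex.I by push_cast; ring]
    rw [Complex.re_ofReal_mul, Complex.exp_ofReal_mul_I_re]
  rw [e1, e2, e3]
  have hnz : Complex.normSq z = ‖a.1 0 0‖ ^ 2 * ‖b.1 0 0‖ ^ 2 := by
    rw [hz, Complex.normSq_mul, Complex.normSq_eq_norm_sq, Complex.normSq_eq_norm_sq]
  have hnw : Complex.normSq w
      = (1 - ‖a.1 0 0‖ ^ 2) * (1 - ‖b.1 0 0‖ ^ 2) := by
    rw [hw, Complex.normSq_mul, Complex.normSq_eq_norm_sq, Complex.normSq_eq_norm_sq, ha1, hb1]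
  rw [hnz, hnw, hc₀, hc₁, habs]
  ring
end
end

section
/- Let 0 < t₁ ≤ t₂, set c₁ = cosh t₁ cosh t₂ and c₂ = sinh t₁ sinh t₂, and let F : ℝ → ℝ be continuous. Then ∫_0^{2π} F(c₁ + c₂ cos θ) dθ = 2 ∫_{t₂−t₁}^{t₂+t₁} F(cosh r) · sinh r / √(c₂² − (c₁ − cosh r)²) dr. -/
open scoped Real
open MeasureTheory Set

/-- The change of variables `cosh r = c₁ + c₂ cos θ` with `c₁ = cosh t₁ cosh t₂` and
`c₂ = sinh t₁ sinh t₂`. -/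
theorem integral_cosh_cos_change_of_variables (t₁ t₂ : ℝ) (ht₁ : 0 < t₁) (ht : t₁ ≤ t₂)
    (c₁ c₂ : ℝ) (hc₁ : c₁ = Real.cosh t₁ * Real.cosh t₂)
    (hc₂ : c₂ = Real.sinh t₁ * Real.sinh t₂)
    (F : ℝ → ℝ) (hF : Continuous F) :
    ∫ θ in (0 : ℝ)..2 * π, F (c₁ + c₂ * Real.cos θ)
      = 2 * ∫ r in t₂ - t₁..t₂ + t₁,
          F (Real.cosh r) * Real.sinh r / Real.sqrt (c₂ ^ 2 - (c₁ - Real.cosh r) ^ 2) := by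
  have ht₂ : 0 < t₂ := ht₁.trans_le ht
  have hc₂pos : 0 < c₂ := by
    rw [hc₂]; exact mul_pos (Real.sinh_pos_iff.2 ht₁) (Real.sinh_pos_iff.2 ht₂)
  set a := t₂ - t₁ with ha_def
  set b := t₂ + t₁ with hb_def
  have ha0 : 0 ≤ a := by rw [ha_def]; linarith
  have hb0 : 0 < b := by rw [hb_def]; linarith
  have hab : a < b := by rw [ha_def, hb_def]; linarith
  have hcosha : Real.cosh a = c₁ - c₂ := by rw [ha_def, hc₁, hc₂, Real.cosh_sub]; ring
  have hcoshb : Real.cosh b = c₁ + c₂ := by rw [hb_def, hc₁, hc₂, Real.cosh_add]; ring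
  set G : ℝ → ℝ := fun θ => F (c₁ + c₂ * Real.cos θ) with hG
  set W : ℝ → ℝ := fun r =>
    F (Real.cosh r) * Real.sinh r / Real.sqrt (c₂ ^ 2 - (c₁ - Real.cosh r) ^ 2) with hW
  set φ : ℝ → ℝ := fun r => Real.arccos ((Real.cosh r - c₁) / c₂) with hφ
  -- bounds on the argument of arccos for r in the open interval
  have hx_mem : ∀ r ∈ Ioo a b, (Real.cosh r - c₁) / c₂ ∈ Ioo (-1 : ℝ) 1 := by
    intro r hr
    have h1 : Real.cosh a < Real.cosh r := by
      rw [Real.cosh_lt_cosh, abs_of_nonneg ha0, abs_of_nonneg (ha0.trans hr.1.le)]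
      exact hr.1
    have h2 : Real.cosh r < Real.cosh b := by
      rw [Real.cosh_lt_cosh, abs_of_nonneg (ha0.trans hr.1.le), abs_of_nonneg hb0.le]
      exact hr.2
    rw [hcosha] at h1; rw [hcoshb] at h2
    constructor
    · rw [lt_div_iff₀ hc₂pos]; linarith
    · rw [div_lt_one hc₂pos]; linarith
  -- derivative of φ on the open interval
  set φ' : ℝ → ℝ := fun r =>
    -(1 / Real.sqrt (1 - ((Real.cosh r - c₁) / c₂) ^ 2)) * (Real.sinh r / c₂) with hφ'
  have hderiv : ∀ r ∈ Ioo a b, HasDerivWithinAt φ (φ' r) (Ioo a b) r := by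
    intro r hr
    have hx := hx_mem r hr
    have hinner : HasDerivAt (fun r => (Real.cosh r - c₁) / c₂) (Real.sinh r / c₂) r :=
      ((Real.hasDerivAt_cosh r).sub_const c₁).div_const c₂
    exact ((Real.hasDerivAt_arccos (ne_of_gt hx.1) (ne_of_lt hx.2)).comp r
      hinner).hasDerivWithinAt
  -- injectivity of φ on the open interval
  have hinj : InjOn φ (Ioo a b) := by
    intro r hr s hs he
    have hx := Real.arccos_injOn (Ioo_subset_Icc_self (hx_mem r hr))
      (Ioo_subset_Icc_self (hx_mem s hs)) he
    have hcosh : Real.cosh r = Real.cosh s := by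
      field_simp at hx; linarith
    have hr0 : 0 ≤ r := ha0.trans hr.1.le
    have hs0 : 0 ≤ s := ha0.trans hs.1.le
    rcases lt_trichotomy r s with h | h | h
    · exfalso
      have habs : |r| < |s| := by rw [abs_of_nonneg hr0, abs_of_nonneg hs0]; exact h
      have := Real.cosh_lt_cosh.2 habs
      linarith
    · exact h
    · exfalso
      have habs : |s| < |r| := by rw [abs_of_nonneg hs0, abs_of_nonneg hr0]; exact h
      have := Real.cosh_lt_cosh.2 habs
      linarith
  -- image of the open interval
  have himage : φ '' Ioo a b = Ioo 0 π := by
    apply Subset.antisymm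
    · rintro θ ⟨r, hr, rfl⟩
      have hx := hx_mem r hr
      refine ⟨Real.arccos_pos.2 hx.2, ?_⟩
      have := Real.strictAntiOn_arccos (by norm_num : (-1:ℝ) ∈ Icc (-1:ℝ) 1)
        (Ioo_subset_Icc_self hx) hx.1
      rwa [Real.arccos_neg_one] at this
    · rintro θ ⟨hθ0, hθπ⟩
      have hcos : Real.cos θ ∈ Ioo (-1 : ℝ) 1 := by
        constructor
        · have := Real.cos_lt_cos_of_nonneg_of_le_pi hθ0.le le_rfl hθπ
          rwa [Real.cos_pi] at this
        · have := Real.cos_lt_cos_of_nonneg_of_le_pi le_rfl hθπ.le hθ0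
          rwa [Real.cos_zero] at this
      have hmem : c₁ + c₂ * Real.cos θ ∈ Ioo (Real.cosh a) (Real.cosh b) := by
        rw [hcosha, hcoshb]
        constructor <;> nlinarith [hcos.1, hcos.2]
      obtain ⟨r, hr, hrc⟩ := intermediate_value_Ioo hab.le Real.continuous_cosh.continuousOn hmem
      refine ⟨r, hr, ?_⟩
      rw [hφ]
      simp only []
      rw [hrc]
      have : (c₁ + c₂ * Real.cos θ - c₁) / c₂ = Real.cos θ := by field_simp; ring
      rw [this, Real.arccos_cos hθ0.le hθπ.le]
  -- the pointwise identity on the open interval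
  have hEq : EqOn (fun r => |φ' r| • G (φ r)) W (Ioo a b) := by
    intro r hr
    have hx := hx_mem r hr
    have hsinh : 0 < Real.sinh r := Real.sinh_pos_iff.2 (ha0.trans_lt hr.1)
    have h1x : 0 < 1 - ((Real.cosh r - c₁) / c₂) ^ 2 := by
      nlinarith [hx.1, hx.2]
    have hsq : 0 < Real.sqrt (1 - ((Real.cosh r - c₁) / c₂) ^ 2) := Real.sqrt_pos.2 h1x
    have hcosφ : c₁ + c₂ * Real.cos (φ r) = Real.cosh r := by
      rw [hφ]; simp only []
      rw [Real.cos_arccos hx.1.le hx.2.le]; field_simp; ring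
    have habs : |φ' r| = 1 / Real.sqrt (1 - ((Real.cosh r - c₁) / c₂) ^ 2) *
        (Real.sinh r / c₂) := by
      rw [hφ']; simp only []
      rw [abs_mul, abs_neg, abs_of_nonneg (by positivity), abs_of_nonneg (by positivity)]
    have hsqrt_eq : Real.sqrt (c₂ ^ 2 - (c₁ - Real.cosh r) ^ 2)
        = c₂ * Real.sqrt (1 - ((Real.cosh r - c₁) / c₂) ^ 2) := by
      have : c₂ ^ 2 - (c₁ - Real.cosh r) ^ 2
          = c₂ ^ 2 * (1 - ((Real.cosh r - c₁) / c₂) ^ 2) := by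
        field_simp; ring
      rw [this, Real.sqrt_mul (sq_nonneg c₂), Real.sqrt_sq hc₂pos.le]
    show |φ' r| • G (φ r) = W r
    rw [hW]; simp only []
    rw [smul_eq_mul, habs, hG]; simp only []
    rw [hcosφ, hsqrt_eq]
    have key : ∀ fv hv sv cv : ℝ, cv ≠ 0 → sv ≠ 0 →
        1 / sv * (hv / cv) * fv = fv * hv / (cv * sv) := by
      intros fv hv sv cv h1 h2; field_simp
    exact key _ _ _ _ hc₂pos.ne' hsq.ne' 
  -- continuity of G
  have hGc : Continuous G := hF.comp (by continuity)
  -- symmetry: integral over [0, 2π] is twice the integral over [0, π]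
  have hsym : ∫ θ in (0 : ℝ)..2 * π, G θ = 2 * ∫ θ in (0 : ℝ)..π, G θ := by
    have hsplit := intervalIntegral.integral_add_adjacent_intervals (μ := MeasureTheory.volume)
      (hGc.intervalIntegrable (0 : ℝ) π) (hGc.intervalIntegrable π (2 * π))
    have hcomp : (∫ θ in (0 : ℝ)..π, G (2 * π - θ)) = ∫ θ in π..2 * π, G θ := by
      have := intervalIntegral.integral_comp_sub_left (a := (0:ℝ)) (b := π) G (2 * π)
      rw [this, show 2 * π - π = π by ring, sub_zero]
    have hGsub : ∀ θ : ℝ, G (2 * π - θ) = G θ := by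
      intro θ
      rw [hG]; simp only []
      rw [Real.cos_sub, Real.cos_two_pi, Real.sin_two_pi]
      ring_nf
    rw [← hsplit, ← hcomp]
    simp only [hGsub]
    ring
  -- main change of variables
  have hmain : ∫ θ in (0 : ℝ)..π, G θ = ∫ r in a..b, W r := by
    rw [intervalIntegral.integral_of_le Real.pi_pos.le,
      intervalIntegral.integral_of_le hab.le,
      MeasureTheory.integral_Ioc_eq_integral_Ioo,
      MeasureTheory.integral_Ioc_eq_integral_Ioo, ← himage,
      MeasureTheory.integral_image_eq_integral_abs_deriv_smul measurableSet_Ioo hderiv hinj G,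
      MeasureTheory.setIntegral_congr_fun measurableSet_Ioo hEq]
  rw [hsym, hmain]
end
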